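/- Fix a real constant λ > 1. On ℓ²(ℤ) with canonical orthonormal basis (e_n)_{n∈ℤ}, define weight sequences a(n) = exp(−λⁿ) if n ≥ 1 is even and a(n) = 1 otherwise, and b(n) = exp(−λⁿ) if n ≥ 1 is odd and b(n) = 1 otherwise. Let D_a and D_b be the diagonal operators with these weights, let U be the bilateral forward shift (U e_n = e_{n+1}), and set A = D_a and B = U D_b. Then the Kronecker representation (H^λ, f^λ) with f^λ_α = A and f^λ_β = B on H₁ = H₂ = ℓ²(ℤ) is transitive: whenever T₁ and T₂ are bounded operators on ℓ²(ℤ) with T₂ A = A T₁ and T₂ B = B T₁, there is a scalar α ∈ ℂ with T₁ = T₂ = α I. -/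

import Mathlib

noncomputable section
namespace Stmt12Aux

abbrev E2 := lp (fun _ : ℤ => ℂ) 2

def e (n : ℤ) : E2 := lp.single 2 n (1 : ℂ)

def evalCLM (m : ℤ) : E2 →L[ℂ] ℂ :=
  LinearMap.mkContinuous
    { toFun := fun f => f m
      map_add' := fun f g => by simp [lp.coeFn_add]
      map_smul' := fun c f => by simp [lp.coeFn_smul] }
    1 (fun f => by rw [one_mul]; exact lp.norm_apply_le_norm two_ne_zero f m)

@[simp] lemma evalCLM_apply (m : ℤ) (f : E2) : evalCLM m f = f m := rfl

lemma e_apply_self (n : ℤ) : (e n : ∀ _ : ℤ, ℂ) n = 1 := lp.single_apply_self 2 n 1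

lemma e_apply_ne {m n : ℤ} (h : m ≠ n) : (e n : ∀ _ : ℤ, ℂ) m = 0 :=
  lp.single_apply_ne 2 n 1 h

lemma single_eq_smul_e (n : ℤ) (c : ℂ) : lp.single 2 n c = c • e n := by
  rw [e, ← lp.single_smul]
  norm_num

lemma norm_e (n : ℤ) : ‖e n‖ = 1 := by
  rw [e, lp.norm_single (E := fun _ : ℤ => ℂ) (p := 2) (by norm_num) n (1 : ℂ), norm_one]

/-- diagonal operator acts diagonally on every vector -/
lemma diag_apply (A : E2 →L[ℂ] E2) (w : ℤ → ℂ)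
    (hA : ∀ n, A (e n) = w n • e n) (x : E2) (m : ℤ) :
    (A x : ∀ _ : ℤ, ℂ) m = w m * x m := by
  have h0 : HasSum (fun i : ℤ => lp.single 2 i (x i)) x :=
    lp.hasSum_single (by norm_num) x
  have h1 : HasSum (fun i : ℤ => evalCLM m (A (lp.single 2 i (x i)))) ((A x : ∀ _, ℂ) m) :=
    ((evalCLM m).comp A).hasSum h0
  have h2 : (fun i : ℤ => evalCLM m (A (lp.single 2 i (x i)))) =
      fun i : ℤ => if i = m then w m * x m else 0 := by
    funext i
    rcases eq_or_ne i m with rfl | hi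
    · simp [single_eq_smul_e, hA, lp.coeFn_smul, e_apply_self, mul_comm]
    · simp [single_eq_smul_e, hA, lp.coeFn_smul, e_apply_ne (Ne.symm hi), hi]
  rw [h2] at h1
  exact h1.unique (hasSum_ite_eq m (w m * x m))

/-- weighted shift operator acts as shift on every vector -/
lemma shift_apply (B : E2 →L[ℂ] E2) (w : ℤ → ℂ)
    (hB : ∀ n, B (e n) = w n • e (n + 1)) (x : E2) (m : ℤ) :
    (B x : ∀ _ : ℤ, ℂ) m = w (m - 1) * x (m - 1) := by
  have h0 : HasSum (fun i : ℤ => lp.single 2 i (x i)) x :=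
    lp.hasSum_single (by norm_num) x
  have h1 : HasSum (fun i : ℤ => evalCLM m (B (lp.single 2 i (x i)))) ((B x : ∀ _, ℂ) m) :=
    ((evalCLM m).comp B).hasSum h0
  have h2 : (fun i : ℤ => evalCLM m (B (lp.single 2 i (x i)))) =
      fun i : ℤ => if i = m - 1 then w (m - 1) * x (m - 1) else 0 := by
    funext i
    rcases eq_or_ne i (m - 1) with rfl | hi
    · have : m - 1 + 1 = m := by ring
      simp [single_eq_smul_e, hB, lp.coeFn_smul, this, e_apply_self, mul_comm]
    · have : m ≠ i + 1 := by omega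
      simp [single_eq_smul_e, hB, lp.coeFn_smul, e_apply_ne this, hi]
  rw [h2] at h1
  exact h1.unique (hasSum_ite_eq (m - 1) (w (m - 1) * x (m - 1)))

/-- an operator that is scalar on the basis is scalar -/
lemma eq_smul_one (T : E2 →L[ℂ] E2) (a : ℂ) (h : ∀ n, T (e n) = a • e n) :
    T = a • (1 : E2 →L[ℂ] E2) := by
  refine ContinuousLinearMap.ext fun x => ?_
  have h0 : HasSum (fun i : ℤ => lp.single 2 i (x i)) x :=
    lp.hasSum_single (by norm_num) x
  have h1 : HasSum (fun i : ℤ => T (lp.single 2 i (x i))) (T x) := T.hasSum h0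
  have h2 : HasSum (fun i : ℤ => T (lp.single 2 i (x i))) (a • x) := by
    have := h0.const_smul a
    refine HasSum.congr_fun this ?_  -- maybe wrong name
    intro i
    rw [single_eq_smul_e, map_smul, h, smul_comm]
  have := h1.unique h2
  simpa using this



variable {l : ℝ}

/-- telescoping potential -/
def F (l : ℝ) (t : ℤ) : ℝ := if 1 ≤ t then (-l) ^ t / (l + 1) else (-l) / (l + 1)

def ga (l : ℝ) (t : ℤ) : ℝ := if 1 ≤ t ∧ Even t then -(l ^ t.toNat) else 0
def gb (l : ℝ) (t : ℤ) : ℝ := if 1 ≤ t ∧ Odd t then -(l ^ t.toNat) else 0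

lemma hl0 (hl : 1 < l) : (0:ℝ) < l := lt_trans one_pos hl
lemma hl1 (hl : 1 < l) : (0:ℝ) < l + 1 := by linarith

lemma pow_toNat (hl : 1 < l) {t : ℤ} (ht : 1 ≤ t) : l ^ t.toNat = l ^ t := by
  rw [← zpow_natCast, Int.toNat_of_nonneg (by omega)]

lemma telescope (hl : 1 < l) (t : ℤ) : ga l t - gb l t = F l (t + 1) - F l t := by
  have hlne : l + 1 ≠ 0 := ne_of_gt (hl1 hl)
  have hl0' : l ≠ 0 := ne_of_gt (hl0 hl)
  rcases lt_or_ge t 1 with ht | ht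
  · have hga : ga l t = 0 := by rw [ga, if_neg]; rintro ⟨h, -⟩; omega
    have hgb : gb l t = 0 := by rw [gb, if_neg]; rintro ⟨h, -⟩; omega
    rw [hga, hgb]
    rcases lt_or_ge (t + 1) 1 with ht1 | ht1
    · rw [F, F, if_neg (by omega), if_neg (by omega)]; ring
    · have : t = 0 := by omega
      subst this
      rw [F, F, if_pos (by omega), if_neg (by omega)]
      norm_num
  · have ht1 : (1:ℤ) ≤ t + 1 := by omega
    rw [F, F, if_pos ht1, if_pos ht]
    rcases Int.even_or_odd t with he | ho
    · have hodd : Odd (t + 1) := he.add_one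
      have hga : ga l t = -(l ^ t.toNat) := if_pos ⟨ht, he⟩
      have hgb : gb l t = 0 := by
        rw [gb, if_neg]; rintro ⟨-, h⟩; exact (Int.not_odd_iff_even.mpr he) h
      rw [hga, hgb, hodd.neg_zpow, he.neg_zpow, pow_toNat hl ht,
        zpow_add_one₀ hl0']
      field_simp
      ring
    · have heven : Even (t + 1) := by
        rcases ho with ⟨k, hk⟩; exact ⟨k + 1, by omega⟩
      have hga : ga l t = 0 := by
        rw [ga, if_neg]; rintro ⟨-, h⟩; exact (Int.not_even_iff_odd.mpr ho) h
      have hgb : gb l t = -(l ^ t.toNat) := if_pos ⟨ht, ho⟩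
      rw [hga, hgb, heven.neg_zpow, ho.neg_zpow, pow_toNat hl ht,
        zpow_add_one₀ hl0']
      field_simp
      ring

lemma F_lb (hl : 1 < l) {s t : ℤ} (hst : s ≤ t) (ht : 1 ≤ t) :
    -(l ^ t) / (l + 1) ≤ F l s := by
  have h1 : (0:ℝ) < l + 1 := hl1 hl
  rcases le_or_gt 1 s with hs | hs
  · rw [F, if_pos hs]
    have hspos : (0:ℝ) < l ^ s := zpow_pos (hl0 hl) s
    have hmono : l ^ s ≤ l ^ t := zpow_le_zpow_right₀ hl.le hst
    have h2 : -(l ^ s) ≤ (-l) ^ s := by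
      rcases Int.even_or_odd s with he | ho
      · rw [he.neg_zpow]; linarith
      · rw [ho.neg_zpow]
    have h3 : -(l ^ t) ≤ (-l) ^ s := by linarith
    exact div_le_div_of_nonneg_right h3 h1.le
  · rw [F, if_neg (by omega)]
    have hmono : l ^ (1:ℤ) ≤ l ^ t := zpow_le_zpow_right₀ hl.le ht
    rw [zpow_one] at hmono
    have h3 : -(l ^ t) ≤ -l := by linarith
    exact (div_le_div_of_nonneg_right h3 h1.le).trans_eq (by ring)

lemma F_ub (hl : 1 < l) {s t : ℤ} (hst : s ≤ t) (ht : 1 ≤ t) :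
    F l s ≤ l ^ t / (l + 1) := by
  have h1 : (0:ℝ) < l + 1 := hl1 hl
  rcases le_or_gt 1 s with hs | hs
  · rw [F, if_pos hs]
    have hspos : (0:ℝ) < l ^ s := zpow_pos (hl0 hl) s
    have h2 : (-l) ^ s ≤ l ^ s := by
      rcases Int.even_or_odd s with he | ho
      · rw [he.neg_zpow]
      · rw [ho.neg_zpow]; linarith
    have hmono : l ^ s ≤ l ^ t := zpow_le_zpow_right₀ hl.le hst
    exact div_le_div_of_nonneg_right (by linarith) h1.le
  · rw [F, if_neg (by omega)]
    have hpos : (0:ℝ) < l ^ t := zpow_pos (hl0 hl) t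
    have : (-l) ≤ l ^ t := by nlinarith [hl0 hl]
    exact div_le_div_of_nonneg_right this h1.le

lemma F_odd (hl : 1 < l) {t : ℤ} (ht : 1 ≤ t) (ho : Odd t) :
    F l t = -(l ^ t) / (l + 1) := by
  rw [F, if_pos ht, ho.neg_zpow]

lemma F_even (hl : 1 < l) {t : ℤ} (ht : 1 ≤ t) (he : Even t) :
    F l t = l ^ t / (l + 1) := by
  rw [F, if_pos ht, he.neg_zpow]

/-- key divergence lemma -/
lemma F_div (hl : 1 < l) {m n : ℤ} (h : m ≠ n) (R : ℝ) :
    ∃ k : ℕ, F l (m + k) - F l (n + k) ≤ -R := by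
  have h1 : (0:ℝ) < l + 1 := hl1 hl
  have h2 : (0:ℝ) < l - 1 := by linarith
  have hl0' : l ≠ 0 := ne_of_gt (hl0 hl)
  obtain ⟨j, hj⟩ := pow_unbounded_of_one_lt (R * (l + 1) / (l - 1)) hl
  -- key numeric step: for K with K - 1 ≥ j, R ≤ (l^K - l^(K-1))/(l+1)
  have key : ∀ K : ℤ, (j : ℤ) ≤ K - 1 → R ≤ (l ^ K - l ^ (K - 1)) / (l + 1) := by
    intro K hK
    have hKj : l ^ (j : ℤ) ≤ l ^ (K - 1) := zpow_le_zpow_right₀ hl.le hK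
    have hRj : R * (l + 1) / (l - 1) < l ^ ((j : ℤ)) := by rwa [zpow_natCast]
    have hlt : R * (l + 1) < l ^ (K - 1) * (l - 1) :=
      (div_lt_iff₀ h2).mp (lt_of_lt_of_le hRj hKj)
    have hKK : l ^ K = l ^ (K - 1) * l := by
      rw [← zpow_add_one₀ hl0']; ring_nf
    rw [le_div_iff₀ h1, hKK]
    nlinarith
  rcases h.lt_or_gt with hmn | hmn
  · -- m < n : choose K = n + k even, with top term at n-slot positive
    set K : ℤ := 2 * ((j : ℤ) + n.natAbs + 1) with hKdef
    have hKn : n + 1 ≤ K := by omega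
    have hKj : (j : ℤ) ≤ K - 1 := by omega
    have hK1 : (1:ℤ) ≤ K - 1 := by omega
    refine ⟨(K - n).toNat, ?_⟩
    have hk : n + ((K - n).toNat : ℤ) = K := by omega
    have hk' : m + ((K - n).toNat : ℤ) = m + (K - n) := by omega
    rw [hk, hk']
    have hFn : F l K = l ^ K / (l + 1) := F_even hl (by omega) ⟨(j:ℤ) + n.natAbs + 1, by ring⟩
    have hFm : F l (m + (K - n)) ≤ l ^ (K - 1) / (l + 1) :=
      F_ub hl (by omega) hK1
    have hkey := key K hKj
    rw [hFn]
    have : (l ^ K - l ^ (K - 1)) / (l + 1) = l ^ K / (l + 1) - l ^ (K - 1) / (l + 1) := by ring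
    linarith [this ▸ hkey]
  · -- n < m : choose K = m + k odd, top term at m-slot negative
    set K : ℤ := 2 * ((j : ℤ) + m.natAbs + 1) + 1 with hKdef
    have hKm : m + 1 ≤ K := by omega
    have hKj : (j : ℤ) ≤ K - 1 := by omega
    have hK1 : (1:ℤ) ≤ K - 1 := by omega
    refine ⟨(K - m).toNat, ?_⟩
    have hk : m + ((K - m).toNat : ℤ) = K := by omega
    have hk' : n + ((K - m).toNat : ℤ) = n + (K - m) := by omega
    rw [hk, hk']
    have hFm : F l K = -(l ^ K) / (l + 1) := F_odd hl (by omega) ⟨(j:ℤ) + m.natAbs + 1, by ring⟩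
    have hFn : -(l ^ (K - 1)) / (l + 1) ≤ F l (n + (K - m)) :=
      F_lb hl (by omega) hK1
    have hkey := key K hKj
    rw [hFm]
    have h4 : (l ^ K - l ^ (K - 1)) / (l + 1) =
        -(-(l ^ K) / (l + 1)) + (-(l ^ (K - 1)) / (l + 1)) := by ring
    linarith [h4 ▸ hkey]


end Stmt12Aux
end

open Stmt12Aux in
theorem stmt_12 (l : ℝ) (hl : 1 < l)
    (A B : lp (fun _ : ℤ => ℂ) 2 →L[ℂ] lp (fun _ : ℤ => ℂ) 2)
    (hA : ∀ n : ℤ, A (lp.single 2 n (1 : ℂ)) =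
      (if 1 ≤ n ∧ Even n then (Real.exp (-(l ^ n.toNat)) : ℂ) else 1) •
        lp.single 2 n (1 : ℂ))
    (hB : ∀ n : ℤ, B (lp.single 2 n (1 : ℂ)) =
      (if 1 ≤ n ∧ Odd n then (Real.exp (-(l ^ n.toNat)) : ℂ) else 1) •
        lp.single 2 (n + 1) (1 : ℂ)) :
    ∀ T₁ T₂ : lp (fun _ : ℤ => ℂ) 2 →L[ℂ] lp (fun _ : ℤ => ℂ) 2,
      T₂ ∘L A = A ∘L T₁ → T₂ ∘L B = B ∘L T₁ →
      ∃ a : ℂ, T₁ = a • (1 : lp (fun _ : ℤ => ℂ) 2 →L[ℂ] lp (fun _ : ℤ => ℂ) 2) ∧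
        T₂ = a • (1 : lp (fun _ : ℤ => ℂ) 2 →L[ℂ] lp (fun _ : ℤ => ℂ) 2) := by
  intro T₁ T₂ h1 h2
  classical
  set ea : ℤ → ℝ := fun n => Real.exp (ga l n) with hea
  set eb : ℤ → ℝ := fun n => Real.exp (gb l n) with heb
  have hca : ∀ n : ℤ, (if 1 ≤ n ∧ Even n then ((Real.exp (-(l ^ n.toNat)) : ℝ) : ℂ) else 1)
      = ((ea n : ℝ) : ℂ) := by
    intro n
    simp only [hea, ga]
    split_ifs <;> simp [Real.exp_zero]
  have hcb : ∀ n : ℤ, (if 1 ≤ n ∧ Odd n then ((Real.exp (-(l ^ n.toNat)) : ℝ) : ℂ) else 1)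
      = ((eb n : ℝ) : ℂ) := by
    intro n
    simp only [heb, gb]
    split_ifs <;> simp [Real.exp_zero]
  have hA' : ∀ n : ℤ, A (e n) = ((ea n : ℝ) : ℂ) • e n := by
    intro n; rw [← hca n]; exact hA n
  have hB' : ∀ n : ℤ, B (e n) = ((eb n : ℝ) : ℂ) • e (n + 1) := by
    intro n; rw [← hcb n]; exact hB n
  set t1c : ℤ → ℤ → ℂ := fun m n => (T₁ (e n) : ∀ _ : ℤ, ℂ) m with ht1c
  set t2c : ℤ → ℤ → ℂ := fun m n => (T₂ (e n) : ∀ _ : ℤ, ℂ) m with ht2c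
  have eapos : ∀ n, (0:ℝ) < ea n := fun n => Real.exp_pos _
  have ebpos : ∀ n, (0:ℝ) < eb n := fun n => Real.exp_pos _
  have eane : ∀ n, ((ea n : ℝ) : ℂ) ≠ 0 := fun n => by
    exact_mod_cast (ne_of_gt (eapos n))
  have ebne : ∀ n, ((eb n : ℝ) : ℂ) ≠ 0 := fun n => by
    exact_mod_cast (ne_of_gt (ebpos n))
  -- entry relations
  have R1 : ∀ m n : ℤ, ((ea n : ℝ) : ℂ) * t2c m n = ((ea m : ℝ) : ℂ) * t1c m n := by
    intro m n
    have h := DFunLike.congr_fun h1 (e n)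
    simp only [ContinuousLinearMap.comp_apply] at h
    have hc := congrArg (fun z : E2 => (z : ∀ _ : ℤ, ℂ) m) h
    simp only at hc
    rw [hA', map_smul] at hc
    have hL : ((((ea n : ℝ) : ℂ) • T₂ (e n) : E2) : ∀ _ : ℤ, ℂ) m
        = ((ea n : ℝ) : ℂ) * t2c m n := by
      rw [lp.coeFn_smul]; rfl
    have hR : ((A (T₁ (e n)) : E2) : ∀ _ : ℤ, ℂ) m = ((ea m : ℝ) : ℂ) * t1c m n :=
      diag_apply A (fun k => ((ea k : ℝ) : ℂ)) hA' (T₁ (e n)) m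
    rw [hL, hR] at hc
    exact hc
  have R2 : ∀ m n : ℤ, ((eb n : ℝ) : ℂ) * t2c (m + 1) (n + 1)
      = ((eb m : ℝ) : ℂ) * t1c m n := by
    intro m n
    have h := DFunLike.congr_fun h2 (e n)
    simp only [ContinuousLinearMap.comp_apply] at h
    have hc := congrArg (fun z : E2 => (z : ∀ _ : ℤ, ℂ) (m + 1)) h
    simp only at hc
    rw [hB', map_smul] at hc
    have hL : ((((eb n : ℝ) : ℂ) • T₂ (e (n + 1)) : E2) : ∀ _ : ℤ, ℂ) (m + 1)
        = ((eb n : ℝ) : ℂ) * t2c (m + 1) (n + 1) := by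
      rw [lp.coeFn_smul]; rfl
    have hR : ((B (T₁ (e n)) : E2) : ∀ _ : ℤ, ℂ) (m + 1)
        = ((eb m : ℝ) : ℂ) * t1c m n := by
      rw [shift_apply B (fun k => ((eb k : ℝ) : ℂ)) hB' (T₁ (e n)) (m + 1)]
      simp [ht1c]
    rw [hL, hR] at hc
    exact hc
  -- one step recursion for t2c
  have hstep : ∀ m n : ℤ, ((ea m * eb n : ℝ) : ℂ) * t2c (m + 1) (n + 1)
      = ((ea n * eb m : ℝ) : ℂ) * t2c m n := by
    intro m n
    push_cast
    linear_combination ((ea m : ℝ) : ℂ) * R2 m n - ((eb m : ℝ) : ℂ) * R1 m n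
  set u : ℤ → ℤ → ℝ := fun m n => ‖t2c m n‖ with hu
  have normstep : ∀ p q : ℤ, u (p + 1) (q + 1)
      = Real.exp ((F l (q + 1) - F l q) - (F l (p + 1) - F l p)) * u p q := by
    intro p q
    have hexp : Real.exp ((F l (q + 1) - F l q) - (F l (p + 1) - F l p))
        = (ea q * eb p) / (ea p * eb q) := by
      rw [← telescope hl q, ← telescope hl p]
      have : ga l q - gb l q - (ga l p - gb l p) = (ga l q + gb l p) - (ga l p + gb l q) := by
        ring
      rw [this, Real.exp_sub, Real.exp_add, Real.exp_add]
    have hnorm := congrArg norm (hstep p q)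
    have hpq : (0:ℝ) < ea p * eb q := mul_pos (eapos p) (ebpos q)
    have hqp : (0:ℝ) < ea q * eb p := mul_pos (eapos q) (ebpos p)
    rw [norm_mul, norm_mul, Complex.norm_real, Complex.norm_real,
      Real.norm_eq_abs, Real.norm_eq_abs, abs_of_pos hpq, abs_of_pos hqp] at hnorm
    rw [hexp]
    field_simp
    rw [eq_div_iff hpq.ne']; simp only [hu]; linarith [hnorm]
  have hiter : ∀ m n : ℤ, ∀ k : ℕ, u (m + k) (n + k)
      = Real.exp ((F l (n + k) - F l n) - (F l (m + k) - F l m)) * u m n := by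
    intro m n k
    induction k with
    | zero => simp
    | succ k ih =>
      have hm : (m + (k + 1 : ℕ) : ℤ) = (m + k) + 1 := by push_cast; ring
      have hn : (n + (k + 1 : ℕ) : ℤ) = (n + k) + 1 := by push_cast; ring
      rw [hm, hn, normstep (m + k) (n + k), ih, ← mul_assoc, ← Real.exp_add]
      congr 2
      ring
  have hbound : ∀ p q : ℤ, u p q ≤ ‖T₂‖ := by
    intro p q
    have h1' : u p q ≤ ‖T₂ (e q)‖ := lp.norm_apply_le_norm two_ne_zero (T₂ (e q)) p
    have h2' : ‖T₂ (e q)‖ ≤ ‖T₂‖ * ‖e q‖ := T₂.le_opNorm (e q)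
    rw [norm_e] at h2'
    linarith
  -- off-diagonal entries of T₂ vanish
  have hoff2 : ∀ m n : ℤ, m ≠ n → t2c m n = 0 := by
    intro m n hmn
    have hu0 : u m n ≤ 0 := by
      refine le_of_forall_pos_le_add fun ε hε => ?_
      set C : ℝ := ‖T₂‖ + 1 with hC
      have hCpos : 0 < C := by positivity
      have hCε : 0 < C / ε := div_pos hCpos hε
      obtain ⟨k, hk⟩ := F_div hl hmn (Real.log (C / ε) + (F l n - F l m))
      have hit := hiter m n k
      have hb := hbound (m + k) (n + k)
      rw [hit] at hb
      set X : ℝ := (F l (n + k) - F l n) - (F l (m + k) - F l m) with hX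
      have hXge : Real.log (C / ε) ≤ X := by
        have : F l (m + k) - F l (n + k) ≤ -(Real.log (C / ε) + (F l n - F l m)) := hk
        simp only [hX]
        linarith
      have hupos : 0 ≤ u m n := norm_nonneg _
      have h5 : (C / ε) * u m n ≤ C := by
        have h6 : Real.exp (Real.log (C / ε)) ≤ Real.exp X := Real.exp_le_exp.mpr hXge
        rw [Real.exp_log hCε] at h6
        nlinarith
      have h5' := mul_le_mul_of_nonneg_right h5 hε.le
      rw [mul_right_comm, div_mul_cancel₀ _ (ne_of_gt hε)] at h5'
      have h7 : u m n ≤ ε := le_of_mul_le_mul_left h5' hCpos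
      linarith
    have : ‖t2c m n‖ = 0 := le_antisymm hu0 (norm_nonneg _)
    exact norm_eq_zero.mp this
  -- off-diagonal entries of T₁ vanish
  have hoff1 : ∀ m n : ℤ, m ≠ n → t1c m n = 0 := by
    intro m n hmn
    have h := R1 m n
    rw [hoff2 m n hmn, mul_zero] at h
    exact ((mul_eq_zero.mp h.symm).resolve_left (eane m))
  have hdiageq : ∀ n : ℤ, t1c n n = t2c n n := fun n =>
    (mul_left_cancel₀ (eane n) (R1 n n)).symm
  have hstepdiag : ∀ n : ℤ, t2c (n + 1) (n + 1) = t2c n n := by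
    intro n
    have h := R2 n n
    rw [hdiageq n] at h
    exact mul_left_cancel₀ (ebne n) h
  have hconst : ∀ n : ℤ, t2c n n = t2c 0 0 := by
    intro n
    induction n using Int.induction_on with
    | zero => rfl
    | succ k ih => rw [hstepdiag (k : ℤ)]; exact ih
    | pred k ih =>
      have h := hstepdiag (-(k : ℤ) - 1)
      rw [show -(k : ℤ) - 1 + 1 = -(k : ℤ) by ring] at h
      rw [← h]
      exact ih
  refine ⟨t2c 0 0, eq_smul_one T₁ _ ?_, eq_smul_one T₂ _ ?_⟩
  · intro n
    apply lp.ext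
    funext m
    have hsm : ((t2c 0 0 • e n : E2) : ∀ _ : ℤ, ℂ) m = t2c 0 0 * (e n : ∀ _ : ℤ, ℂ) m := by
      rw [lp.coeFn_smul]; rfl
    rcases eq_or_ne m n with rfl | hmn
    · rw [hsm, e_apply_self, mul_one]
      exact (hdiageq m).trans (hconst m)
    · rw [hsm, e_apply_ne hmn, mul_zero]
      exact hoff1 m n hmn
  · intro n
    apply lp.ext
    funext m
    have hsm : ((t2c 0 0 • e n : E2) : ∀ _ : ℤ, ℂ) m = t2c 0 0 * (e n : ∀ _ : ℤ, ℂ) m := by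
      rw [lp.coeFn_smul]; rfl
    rcases eq_or_ne m n with rfl | hmn
    · rw [hsm, e_apply_self, mul_one]
      exact hconst m
    · rw [hsm, e_apply_ne hmn, mul_zero]
      exact hoff2 m n hmn
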